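/- Let a < b be two positive integers and let G be a finite simple graph of order n with n ≥ 2(a+b)(a+b−1)/a and minimum degree δ(G) ≥ ((a+b−1)² + 4b)/(4a). If |N_G(u) ∪ N_G(v)| ≥ bn/(a+b) for every pair of nonadjacent vertices u and v of G, then G has all fractional [a,b]-factors. -/

import Mathlib

set_option maxHeartbeats 1600000


open Finset

/-- The degree of `v` in the induced subgraph `G − S` (on `V(G) \ S`), i.e. the number of
neighbors of `v` in `G` that lie outside `S`. -/
def dOut {V : Type*} [Fintype V] [DecidableEq V] (G : SimpleGraph V) [DecidableRel G.Adj]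
    (S : Finset V) (v : V) : ℕ :=
  (G.neighborFinset v \ S).card

/-- `Tset G f S = {v ∈ V(G) − S : d_{G−S}(v) < f v}`. -/
def Tset {V : Type*} [Fintype V] [DecidableEq V] (G : SimpleGraph V) [DecidableRel G.Adj]
    (f : V → ℕ) (S : Finset V) : Finset V :=
  Sᶜ.filter fun v => dOut G S v < f v

/-- `h` is (the indicator function of) a fractional `(g,f)`-factor of `G`:
`0 ≤ h(e) ≤ 1` on every edge and `g x ≤ Σ_{e ∋ x} h e ≤ f x` for every vertex `x`. -/
def IsFracFactor {V : Type*} [Fintype V] [DecidableEq V] (G : SimpleGraph V)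
    [DecidableRel G.Adj] (g f : V → ℕ) (h : Sym2 V → ℝ) : Prop :=
  (∀ e ∈ G.edgeFinset, 0 ≤ h e ∧ h e ≤ 1) ∧
  ∀ x : V, (g x : ℝ) ≤ ∑ e ∈ G.incidenceFinset x, h e ∧
    ∑ e ∈ G.incidenceFinset x, h e ≤ (f x : ℝ)

/-- `G` has all fractional `(g,f)`-factors: for every `q : V → ℕ` with `g ≤ q ≤ f`
pointwise, `G` has a fractional `q`-factor (a fractional `(q,q)`-factor). -/
def HasAllFracFactors {V : Type*} [Fintype V] [DecidableEq V] (G : SimpleGraph V)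
    [DecidableRel G.Adj] (g f : V → ℕ) : Prop :=
  ∀ q : V → ℕ, (∀ v, g v ≤ q v) → (∀ v, q v ≤ f v) → ∃ h, IsFracFactor G q q h



section AuxProof
variable {V : Type*} [Fintype V] [DecidableEq V]

private lemma arith_final (a b d₁ d₂ : ℝ) (ha : 1 ≤ a) (hab : a + 1 ≤ b)
    (h0 : 0 ≤ d₁) (h12 : d₁ ≤ d₂) (h2b : d₂ ≤ b - 1) (hint : d₁ = 0 ∨ 1 ≤ d₁)
    (hA : 2*(a+b-1)*d₁ + 1 ≤ (d₁+d₂)*(a+b-d₁))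
    (hB : 2*(a+b-1)*d₂ + 1 ≤ a*(d₁+d₂) + (d₁+d₂)*(b-d₂) + (d₁+1)*(d₂-d₁)) : False := by
  rcases hint with h | h
  · subst h
    nlinarith [mul_nonneg (le_trans h0 h12) (by linarith : (0:ℝ) ≤ a + b - 3)]
  · nlinarith [mul_nonneg (by linarith : (0:ℝ) ≤ d₂ - d₁) (by linarith : (0:ℝ) ≤ d₁ + d₂ - d₁ - 1),
      mul_nonneg (by linarith : (0:ℝ) ≤ d₁ + d₂) (by linarith : (0:ℝ) ≤ 2*d₁ - 2)]

private lemma arith_caseA (a b d₁ s δ : ℝ) (ha : 1 ≤ a) (hab : a + 1 ≤ b)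
    (h0 : 0 ≤ d₁) (hδ : (a+b-1)^2 + 4*b ≤ 4*a*δ) (hsδ : δ - d₁ ≤ s)
    (hE : a * s + 1 ≤ (d₁+1)*(b-d₁)) : False := by
  nlinarith [sq_nonneg (a + b - 1 - 2*d₁)]

private lemma double_count (G : SimpleGraph V) [DecidableRel G.Adj] (A B : Finset V) :
    ∑ v ∈ A, (G.neighborFinset v ∩ B).card = ∑ u ∈ B, (G.neighborFinset u ∩ A).card := by
  have h : ∀ (C D : Finset V), ∑ v ∈ C, (G.neighborFinset v ∩ D).card
      = ∑ v ∈ C, ∑ u ∈ D, if G.Adj v u then 1 else 0 := by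
    intro C D
    refine Finset.sum_congr rfl fun v _ => ?_
    rw [← Finset.sum_filter]
    have : G.neighborFinset v ∩ D = D.filter (fun u => G.Adj v u) := by
      ext u; simp [SimpleGraph.mem_neighborFinset, and_comm]
    rw [this, Finset.card_eq_sum_ones]
  rw [h, h, Finset.sum_comm]
  refine Finset.sum_congr rfl fun u _ => Finset.sum_congr rfl fun v _ => ?_
  simp [G.adj_comm]

private lemma criterion (G : SimpleGraph V) [DecidableRel G.Adj] (a b : ℕ)
    (ha : 0 < a) (hab : a < b)
    (hn : (Fintype.card V : ℝ) ≥ 2 * ((a : ℝ) + b) * ((a : ℝ) + b - 1) / a)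
    (hδ : (G.minDegree : ℝ) ≥ (((a : ℝ) + b - 1) ^ 2 + 4 * b) / (4 * a))
    (hnb : ∀ u v : V, u ≠ v → ¬ G.Adj u v →
      (((G.neighborFinset u ∪ G.neighborFinset v).card : ℝ)) ≥
        (b : ℝ) * (Fintype.card V) / ((a : ℝ) + b))
    (S : Finset V) :
    ∑ v ∈ Tset G (fun _ => b) S, (b - dOut G S v) ≤ a * S.card := by
  by_contra hcon
  push_neg at hcon
  set T := Tset G (fun _ => b) S with hTdef
  have hT : ∀ v ∈ T, v ∉ S ∧ dOut G S v < b := by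
    intro v hv
    simp only [hTdef, Tset, Finset.mem_filter, Finset.mem_compl] at hv
    exact hv
  -- basic real abbreviations
  set n := Fintype.card V with hndef
  set s := S.card with hsdef
  have hapos : (0:ℝ) < a := by exact_mod_cast ha
  have habR : (a:ℝ) + 1 ≤ b := by exact_mod_cast hab
  have haR : (1:ℝ) ≤ a := by exact_mod_cast ha
  -- the violated inequality, cast to ℝ
  have hvio : (a:ℝ) * s + 1 ≤ ∑ v ∈ T, ((b:ℝ) - dOut G S v) := by
    have h1 : a * s + 1 ≤ ∑ v ∈ T, (b - dOut G S v) := hcon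
    have h2 : ((∑ v ∈ T, (b - dOut G S v) : ℕ) : ℝ) = ∑ v ∈ T, ((b:ℝ) - dOut G S v) := by
      rw [Nat.cast_sum]
      refine Finset.sum_congr rfl fun v hv => ?_
      have := (hT v hv).2
      rw [Nat.cast_sub (le_of_lt this)]
    calc (a:ℝ) * s + 1 = ((a * s + 1 : ℕ) : ℝ) := by push_cast; ring
      _ ≤ _ := by rw [← h2]; exact_mod_cast h1
  -- T nonempty
  have hTne : T.Nonempty := by
    by_contra hempty
    rw [Finset.not_nonempty_iff_eq_empty] at hempty
    rw [hempty, Finset.sum_empty] at hvio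
    nlinarith [Nat.cast_nonneg (α := ℝ) s]
  obtain ⟨v₁, hv₁T, hv₁min⟩ := Finset.exists_min_image T (dOut G S) hTne
  set d₁ := dOut G S v₁ with hd₁def
  have hd1b : d₁ < b := (hT v₁ hv₁T).2
  -- degree bound : minDegree ≤ d v + s for v ∈ T
  have hdeg : ∀ v : V, (G.minDegree : ℝ) ≤ dOut G S v + s := by
    intro v
    have h1 : G.degree v ≤ dOut G S v + s := by
      rw [← SimpleGraph.card_neighborFinset_eq_degree]
      exact Finset.card_le_card_sdiff_add_card
    have h2 := G.minDegree_le_degree v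
    exact_mod_cast le_trans h2 h1
  have hδ4a : ((a:ℝ)+b-1)^2 + 4*b ≤ 4*a*(G.minDegree : ℝ) := by
    rw [ge_iff_le, div_le_iff₀ (by positivity)] at hδ
    linarith
  -- pointwise bound d₁ ≤ d v gives sum bound
  have hsum_le : ∀ (U : Finset V) (c : ℕ), U ⊆ T → (∀ v ∈ U, c ≤ dOut G S v) →
      ∑ v ∈ U, ((b:ℝ) - dOut G S v) ≤ U.card * ((b:ℝ) - c) := by
    intro U c hUT hc
    calc ∑ v ∈ U, ((b:ℝ) - dOut G S v) ≤ ∑ v ∈ U, ((b:ℝ) - c) := by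
          refine Finset.sum_le_sum fun v hv => ?_
          have := hc v hv
          have : (c:ℝ) ≤ dOut G S v := by exact_mod_cast this
          linarith
      _ = U.card * ((b:ℝ) - c) := by rw [Finset.sum_const, nsmul_eq_mul]
  by_cases hcase : ∀ v ∈ T, v = v₁ ∨ G.Adj v₁ v
  · -- Case A
    have hTcard : T.card ≤ d₁ + 1 := by
      have hsub : T ⊆ insert v₁ (G.neighborFinset v₁ \ S) := by
        intro v hv
        rcases hcase v hv with rfl | hadj
        · exact Finset.mem_insert_self _ _
        · refine Finset.mem_insert_of_mem ?_
          rw [Finset.mem_sdiff, SimpleGraph.mem_neighborFinset]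
          exact ⟨hadj, (hT v hv).1⟩
      calc T.card ≤ _ := Finset.card_le_card hsub
        _ ≤ (G.neighborFinset v₁ \ S).card + 1 := Finset.card_insert_le _ _
        _ = d₁ + 1 := rfl
    have hE : (a:ℝ) * s + 1 ≤ ((d₁:ℝ)+1) * ((b:ℝ) - d₁) := by
      have h1 := hsum_le T d₁ subset_rfl (fun v hv => hv₁min v hv)
      have h2 : (T.card : ℝ) ≤ (d₁ : ℝ) + 1 := by exact_mod_cast hTcard
      have h3 : (0:ℝ) ≤ (b:ℝ) - d₁ := by
        have : (d₁:ℝ) ≤ b := by exact_mod_cast le_of_lt hd1b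
        linarith
      nlinarith [hvio]
    exact arith_caseA a b d₁ s (G.minDegree : ℝ) haR habR (by positivity) hδ4a
      (by have := hdeg v₁; linarith) hE
  · -- Case B
    push_neg at hcase
    set W := T.filter (fun v => ¬(v = v₁ ∨ G.Adj v₁ v)) with hWdef
    have hWne : W.Nonempty := by
      obtain ⟨v', hv'T, hv'⟩ := hcase
      exact ⟨v', Finset.mem_filter.mpr ⟨hv'T, by push_neg; exact hv'⟩⟩
    obtain ⟨v₂, hv₂W, hv₂min⟩ := Finset.exists_min_image W (dOut G S) hWne
    have hv₂T : v₂ ∈ T := (Finset.mem_filter.mp hv₂W).1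
    have hv₂prop : ¬(v₂ = v₁ ∨ G.Adj v₁ v₂) := (Finset.mem_filter.mp hv₂W).2
    have hne : v₁ ≠ v₂ := fun h => hv₂prop (Or.inl h.symm)
    have hnadj : ¬ G.Adj v₁ v₂ := fun h => hv₂prop (Or.inr h)
    set d₂ := dOut G S v₂ with hd₂def
    have hd12 : d₁ ≤ d₂ := hv₁min v₂ hv₂T
    have hd2b : d₂ < b := (hT v₂ hv₂T).2
    set K := T.filter (fun v => v = v₁ ∨ G.Adj v₁ v) with hKdef
    have hKcard : K.card ≤ d₁ + 1 := by
      have hsub : K ⊆ insert v₁ (G.neighborFinset v₁ \ S) := by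
        intro v hv
        obtain ⟨hvT, hv'⟩ := Finset.mem_filter.mp hv
        rcases hv' with rfl | hadj
        · exact Finset.mem_insert_self _ _
        · refine Finset.mem_insert_of_mem ?_
          rw [Finset.mem_sdiff, SimpleGraph.mem_neighborFinset]
          exact ⟨hadj, (hT v hvT).1⟩
      calc K.card ≤ _ := Finset.card_le_card hsub
        _ ≤ (G.neighborFinset v₁ \ S).card + 1 := Finset.card_insert_le _ _
        _ = d₁ + 1 := rfl
    have hKW : K.card + W.card = T.card := Finset.card_filter_add_card_filter_not _
    -- S and T disjoint, so s + T.card ≤ n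
    have hsTn : s + T.card ≤ n := by
      have hdisj : Disjoint S T := by
        rw [Finset.disjoint_right]
        intro v hv
        exact (hT v hv).1
      calc s + T.card = (S ∪ T).card := (Finset.card_union_of_disjoint hdisj).symm
        _ ≤ n := Finset.card_le_card (Finset.subset_univ _) |>.trans_eq (Finset.card_univ)
    -- neighborhood union bound
    have hβ : (b:ℝ) * n ≤ ((a:ℝ) + b) * (s + d₁ + d₂) := by
      have h1 := hnb v₁ v₂ hne hnadj
      have h2 : (G.neighborFinset v₁ ∪ G.neighborFinset v₂).card ≤ s + d₁ + d₂ := by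
        have hsub : G.neighborFinset v₁ ∪ G.neighborFinset v₂ ⊆
            (S ∪ (G.neighborFinset v₁ \ S)) ∪ (G.neighborFinset v₂ \ S) := by
          intro u hu
          rcases Finset.mem_union.mp hu with h | h
          · by_cases huS : u ∈ S
            · exact Finset.mem_union_left _ (Finset.mem_union_left _ huS)
            · exact Finset.mem_union_left _ (Finset.mem_union_right _ (Finset.mem_sdiff.mpr ⟨h, huS⟩))
          · by_cases huS : u ∈ S
            · exact Finset.mem_union_left _ (Finset.mem_union_left _ huS)
            · exact Finset.mem_union_right _ (Finset.mem_sdiff.mpr ⟨h, huS⟩)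
        calc (G.neighborFinset v₁ ∪ G.neighborFinset v₂).card
            ≤ _ := Finset.card_le_card hsub
          _ ≤ (S ∪ (G.neighborFinset v₁ \ S)).card + (G.neighborFinset v₂ \ S).card :=
              Finset.card_union_le _ _
          _ ≤ (S.card + (G.neighborFinset v₁ \ S).card) + (G.neighborFinset v₂ \ S).card := by
              exact Nat.add_le_add_right (Finset.card_union_le _ _) _
          _ = s + d₁ + d₂ := rfl
      have h2R : ((G.neighborFinset v₁ ∪ G.neighborFinset v₂).card : ℝ) ≤ (s:ℝ) + d₁ + d₂ := by
        exact_mod_cast h2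
      have habpos : (0:ℝ) < (a:ℝ) + b := by linarith
      rw [ge_iff_le, div_le_iff₀ habpos] at h1
      calc (b:ℝ) * n ≤ ((G.neighborFinset v₁ ∪ G.neighborFinset v₂).card : ℝ) * ((a:ℝ)+b) := h1
        _ ≤ ((s:ℝ) + d₁ + d₂) * ((a:ℝ)+b) := by
            apply mul_le_mul_of_nonneg_right h2R (le_of_lt habpos)
        _ = ((a:ℝ) + b) * (s + d₁ + d₂) := by ring
    have hnR : 2*((a:ℝ)+b)*((a:ℝ)+b-1) ≤ (a:ℝ) * n := by
      rw [ge_iff_le, div_le_iff₀ hapos] at hn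
      linarith
    -- E1
    have hE1 : (a:ℝ) * s + 1 ≤ ((n:ℝ) - s) * ((b:ℝ) - d₁) := by
      have h1 := hsum_le T d₁ subset_rfl (fun v hv => hv₁min v hv)
      have h2 : (T.card : ℝ) ≤ (n:ℝ) - s := by
        have : (s:ℝ) + T.card ≤ n := by exact_mod_cast hsTn
        linarith
      have h3 : (0:ℝ) ≤ (b:ℝ) - d₁ := by
        have : (d₁:ℝ) ≤ b := by exact_mod_cast le_of_lt hd1b
        linarith
      nlinarith [hvio]
    -- E2
    have hE2 : (a:ℝ) * s + 1 ≤ ((d₁:ℝ)+1) * ((b:ℝ) - d₁) + ((n:ℝ) - s - d₁ - 1) * ((b:ℝ) - d₂) := by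
      have hsplit : ∑ v ∈ T, ((b:ℝ) - dOut G S v)
          = ∑ v ∈ K, ((b:ℝ) - dOut G S v) + ∑ v ∈ W, ((b:ℝ) - dOut G S v) := by
        rw [hKdef, hWdef, Finset.sum_filter_add_sum_filter_not]
      have hKsum := hsum_le K d₁ (Finset.filter_subset _ _) (fun v hv =>
        hv₁min v (Finset.mem_filter.mp hv).1)
      have hWsum := hsum_le W d₂ (Finset.filter_subset _ _) (fun v hv => hv₂min v hv)
      have hKR : (K.card : ℝ) ≤ (d₁:ℝ) + 1 := by exact_mod_cast hKcard
      have hTcR : (K.card : ℝ) + W.card = T.card := by exact_mod_cast hKW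
      have hTn : (T.card : ℝ) ≤ (n:ℝ) - s := by
        have : (s:ℝ) + T.card ≤ n := by exact_mod_cast hsTn
        linarith
      have hb2 : (0:ℝ) < (b:ℝ) - d₂ := by
        have : (d₂:ℝ) + 1 ≤ b := by exact_mod_cast hd2b
        linarith
      have hb12 : (d₁:ℝ) ≤ d₂ := by exact_mod_cast hd12
      have hb1 : (0:ℝ) ≤ (b:ℝ) - d₁ := by
        have : (d₁:ℝ) ≤ b := by exact_mod_cast le_of_lt hd1b
        linarith
      have step1 : (a:ℝ) * s + 1 ≤ (K.card:ℝ) * ((b:ℝ) - d₁) + (W.card:ℝ) * ((b:ℝ) - d₂) := by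
        rw [hsplit] at hvio; linarith
      have step2 : (K.card:ℝ) * ((b:ℝ) - d₁) + (W.card:ℝ) * ((b:ℝ) - d₂)
          ≤ ((d₁:ℝ)+1) * ((b:ℝ) - d₁) + ((T.card:ℝ) - d₁ - 1) * ((b:ℝ) - d₂) := by
        have hw : (W.card : ℝ) = (T.card:ℝ) - K.card := by linarith [hTcR]
        rw [hw]
        have key : ((d₁:ℝ)+1) * ((b:ℝ) - d₁) + ((T.card:ℝ) - d₁ - 1) * ((b:ℝ) - d₂)
            - ((K.card:ℝ) * ((b:ℝ) - d₁) + ((T.card:ℝ) - K.card) * ((b:ℝ) - d₂))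
            = ((d₁:ℝ) + 1 - K.card) * ((d₂:ℝ) - d₁) := by ring
        have hnn := mul_nonneg (sub_nonneg.mpr hKR) (sub_nonneg.mpr hb12)
        linarith
      have step3 : ((T.card:ℝ) - d₁ - 1) * ((b:ℝ) - d₂) ≤ ((n:ℝ) - s - d₁ - 1) * ((b:ℝ) - d₂) :=
        mul_le_mul_of_nonneg_right (by linarith) hb2.le
      linarith
    -- derive A1, A2 and conclude
    have hd1R : (0:ℝ) ≤ d₁ := Nat.cast_nonneg _
    have hbd1 : (0:ℝ) ≤ (a:ℝ) + b - d₁ := by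
      have : (d₁:ℝ) ≤ b := by exact_mod_cast le_of_lt hd1b
      linarith
    have hbd2 : (0:ℝ) ≤ (a:ℝ) + b - d₂ := by
      have : (d₂:ℝ) ≤ b := by exact_mod_cast le_of_lt hd2b
      linarith
    have habpos : (0:ℝ) < (a:ℝ) + b := by linarith
    have hA1 : 2*((a:ℝ)+b-1)*d₁ + 1 ≤ ((d₁:ℝ)+d₂)*((a:ℝ)+b-d₁) := by
      have key : (a:ℝ) * n * d₁ + ((a:ℝ)+b) ≤ ((a:ℝ)+b)*(((d₁:ℝ)+d₂)*((a:ℝ)+b-d₁)) := by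
        nlinarith [mul_le_mul_of_nonneg_right hβ hbd1,
          mul_le_mul_of_nonneg_left hE1 (le_of_lt habpos)]
      have h2 : ((a:ℝ)+b) * (2*((a:ℝ)+b-1)*d₁ + 1) ≤ ((a:ℝ)+b)*(((d₁:ℝ)+d₂)*((a:ℝ)+b-d₁)) := by
        nlinarith [mul_le_mul_of_nonneg_right hnR hd1R]
      exact le_of_mul_le_mul_left h2 habpos
    have hA2 : 2*((a:ℝ)+b-1)*d₂ + 1 ≤
        (a:ℝ)*((d₁:ℝ)+d₂) + ((d₁:ℝ)+d₂)*((b:ℝ)-d₂) + ((d₁:ℝ)+1)*((d₂:ℝ)-d₁) := by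
      have hd2R : (0:ℝ) ≤ d₂ := Nat.cast_nonneg _
      have key : (a:ℝ) * n * d₂ + ((a:ℝ)+b) ≤
          ((a:ℝ)+b)*((a:ℝ)*((d₁:ℝ)+d₂) + ((d₁:ℝ)+d₂)*((b:ℝ)-d₂) + ((d₁:ℝ)+1)*((d₂:ℝ)-d₁)) := by
        nlinarith [mul_le_mul_of_nonneg_right hβ hbd2,
          mul_le_mul_of_nonneg_left hE2 (le_of_lt habpos)]
      have h2 : ((a:ℝ)+b) * (2*((a:ℝ)+b-1)*d₂ + 1) ≤
          ((a:ℝ)+b)*((a:ℝ)*((d₁:ℝ)+d₂) + ((d₁:ℝ)+d₂)*((b:ℝ)-d₂) + ((d₁:ℝ)+1)*((d₂:ℝ)-d₁)) := by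
        nlinarith [mul_le_mul_of_nonneg_right hnR hd2R]
      exact le_of_mul_le_mul_left h2 habpos
    refine arith_final a b d₁ d₂ haR habR hd1R (by exact_mod_cast hd12)
      (by linarith [(by exact_mod_cast hd2b : (d₂:ℝ) + 1 ≤ (b:ℝ))]) ?_ hA1 hA2
    rcases Nat.eq_zero_or_pos d₁ with h | h
    · left; exact_mod_cast h
    · right; exact_mod_cast h

private lemma gale_of_criterion (G : SimpleGraph V) [DecidableRel G.Adj] (a b : ℕ)
    (q : V → ℕ) (hqa : ∀ v, a ≤ q v) (hqb : ∀ v, q v ≤ b)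
    (hcrit : ∀ S : Finset V, ∑ v ∈ Tset G (fun _ => b) S, (b - dOut G S v) ≤ a * S.card)
    (T : Finset V) :
    ∑ v ∈ T, q v ≤ ∑ u, min (q u) ((G.neighborFinset u ∩ T).card) := by
  set D : V → ℕ := fun u => (G.neighborFinset u ∩ T).card with hDdef
  set S' : Finset V := univ.filter (fun u => u ∉ T ∧ a ≤ D u) with hS'def
  set Z : Finset V := univ.filter (fun u => ¬(u ∈ T) ∧ ¬(a ≤ D u)) with hZdef
  set d' : V → ℕ := dOut G S' with hd'def
  have hTS' : ∀ v ∈ T, v ∉ S' := by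
    intro v hv hmem
    exact ((Finset.mem_filter.mp hmem).2.1) hv
  -- split universe sum
  have hsplit : ∑ u, min (q u) (D u)
      = ∑ v ∈ T, min (q v) (D v) + (∑ u ∈ S', min (q u) (D u) + ∑ u ∈ Z, min (q u) (D u)) := by
    rw [← Finset.sum_filter_add_sum_filter_not univ (fun u => u ∈ T)]
    have e1 : univ.filter (fun u => u ∈ T) = T := by ext u; simp
    have e2 : (univ.filter (fun u => ¬ u ∈ T)).filter (fun u => a ≤ D u) = S' := by
      rw [Finset.filter_filter, hS'def]
    have e3 : (univ.filter (fun u => ¬ u ∈ T)).filter (fun u => ¬ a ≤ D u) = Z := by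
      rw [Finset.filter_filter, hZdef]
    rw [e1, ← Finset.sum_filter_add_sum_filter_not (univ.filter (fun u => ¬ u ∈ T))
        (fun u => a ≤ D u), e2, e3]
  -- pointwise facts
  have hDd' : ∀ v ∈ T, D v ≤ d' v := by
    intro v hv
    apply Finset.card_le_card
    intro u hu
    obtain ⟨h1, h2⟩ := Finset.mem_inter.mp hu
    exact Finset.mem_sdiff.mpr ⟨h1, hTS' u h2⟩
  have step1 : ∑ v ∈ T, q v ≤ ∑ v ∈ T, min (q v) (D v) + ∑ v ∈ T, (q v - D v) := by
    rw [← Finset.sum_add_distrib]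
    refine Finset.sum_le_sum fun v _ => ?_
    omega
  have step2 : ∑ v ∈ T, (q v - D v) ≤ ∑ v ∈ T, (b - d' v) + ∑ v ∈ T, (d' v - D v) := by
    rw [← Finset.sum_add_distrib]
    refine Finset.sum_le_sum fun v hv => ?_
    have h1 := hDd' v hv
    have h2 := hqb v
    omega
  have step3 : ∑ v ∈ T, (d' v - D v) = ∑ u ∈ Z, min (q u) (D u) := by
    have hptw : ∀ v ∈ T, d' v - D v = (G.neighborFinset v ∩ Z).card := by
      intro v hv
      have hsub : G.neighborFinset v ∩ T ⊆ G.neighborFinset v \ S' := by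
        intro u hu
        obtain ⟨h1, h2⟩ := Finset.mem_inter.mp hu
        exact Finset.mem_sdiff.mpr ⟨h1, hTS' u h2⟩
      have heq : (G.neighborFinset v \ S') \ (G.neighborFinset v ∩ T)
          = G.neighborFinset v ∩ Z := by
        ext u
        have hz : u ∈ Z ↔ (u ∉ T ∧ ¬ a ≤ D u) := by
          rw [hZdef]; simp
        have hs : u ∈ S' ↔ (u ∉ T ∧ a ≤ D u) := by
          rw [hS'def]; simp
        simp only [Finset.mem_sdiff, Finset.mem_inter, hz, hs]
        tauto
      have hd'v : d' v = (G.neighborFinset v \ S').card := rfl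
      have hDv : D v = (G.neighborFinset v ∩ T).card := rfl
      rw [hd'v, hDv, ← Finset.card_sdiff_of_subset hsub, heq]
    calc ∑ v ∈ T, (d' v - D v) = ∑ v ∈ T, (G.neighborFinset v ∩ Z).card :=
          Finset.sum_congr rfl hptw
      _ = ∑ u ∈ Z, (G.neighborFinset u ∩ T).card := double_count G T Z
      _ = ∑ u ∈ Z, min (q u) (D u) := by
          refine Finset.sum_congr rfl fun u hu => ?_
          have h1 := (Finset.mem_filter.mp hu).2.2
          have h2 := hqa u
          have h3 : D u = (G.neighborFinset u ∩ T).card := rfl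
          omega
  have step4 : ∑ v ∈ T, (b - d' v) ≤ a * S'.card := by
    have h1 : ∑ v ∈ T, (b - d' v) ≤ ∑ v ∈ Tset G (fun _ => b) S', (b - d' v) := by
      rw [← Finset.sum_filter_add_sum_filter_not T (fun v => d' v < b)]
      have h0 : ∑ v ∈ T.filter (fun v => ¬ d' v < b), (b - d' v) = 0 := by
        refine Finset.sum_eq_zero fun v hv => ?_
        have := (Finset.mem_filter.mp hv).2
        omega
      rw [h0, add_zero]
      refine Finset.sum_le_sum_of_subset_of_nonneg ?_ (fun _ _ _ => Nat.zero_le _)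
      intro v hv
      obtain ⟨hvT, hvlt⟩ := Finset.mem_filter.mp hv
      exact Finset.mem_filter.mpr ⟨Finset.mem_compl.mpr (hTS' v hvT), hvlt⟩
    exact le_trans h1 (hcrit S')
  have step5 : a * S'.card ≤ ∑ u ∈ S', min (q u) (D u) := by
    calc a * S'.card = ∑ _u ∈ S', a := by rw [Finset.sum_const, smul_eq_mul, mul_comm]
      _ ≤ ∑ u ∈ S', min (q u) (D u) := by
          refine Finset.sum_le_sum fun u hu => ?_
          have h1 := (Finset.mem_filter.mp hu).2.2
          have h2 := hqa u
          omega
  have hgoal : ∑ u, min (q u) ((G.neighborFinset u ∩ T).card) = ∑ u, min (q u) (D u) := rfl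
  rw [hgoal, hsplit]
  have hc := le_trans step2 (Nat.add_le_add step4 (le_of_eq step3))
  omega

private def flowRel (G : SimpleGraph V) [DecidableRel G.Adj] (g : V → V → ℝ) :
    V ⊕ V → V ⊕ V → Prop
  | Sum.inl u, Sum.inr v => G.Adj u v ∧ g u v < 1
  | Sum.inr v, Sum.inl u => 0 < g u v
  | _, _ => False

private lemma exists_flow (G : SimpleGraph V) [DecidableRel G.Adj] (q : V → ℕ)
    (hgale : ∀ T : Finset V, ∑ v ∈ T, q v ≤ ∑ u, min (q u) ((G.neighborFinset u ∩ T).card)) :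
    ∃ g : V → V → ℝ, (∀ u v, 0 ≤ g u v) ∧ (∀ u v, g u v ≤ if G.Adj u v then (1:ℝ) else 0) ∧
      (∀ u, ∑ v, g u v = q u) ∧ (∀ v, ∑ u, g u v = q v) := by
  classical
  set cap : V → V → ℝ := fun u v => if G.Adj u v then (1:ℝ) else 0 with hcap
  have hcap0 : ∀ u v, 0 ≤ cap u v := by
    intro u v; rw [hcap]; dsimp only; split <;> norm_num
  set K : Set (V → V → ℝ) := {g | (∀ u v, 0 ≤ g u v ∧ g u v ≤ cap u v) ∧
      (∀ u, ∑ v, g u v ≤ (q u : ℝ)) ∧ (∀ v, ∑ u, g u v ≤ (q v : ℝ))} with hK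
  -- compactness
  have hKclosed : IsClosed K := by
    have h1 : K = (⋂ (u : V), ⋂ (v : V), ({g : V → V → ℝ | 0 ≤ g u v} ∩ {g | g u v ≤ cap u v}))
        ∩ ((⋂ (u : V), {g : V → V → ℝ | ∑ v, g u v ≤ (q u : ℝ)})
          ∩ (⋂ (v : V), {g : V → V → ℝ | ∑ u, g u v ≤ (q v : ℝ)})) := by
      ext g
      simp only [hK, Set.mem_setOf_eq, Set.mem_inter_iff, Set.mem_iInter, forall_and]
    rw [h1]
    have hcont : ∀ u v : V, Continuous (fun g : V → V → ℝ => g u v) :=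
      fun u v => (continuous_apply v).comp (continuous_apply u)
    refine IsClosed.inter (isClosed_iInter fun u => isClosed_iInter fun v =>
      IsClosed.inter ?_ ?_) (IsClosed.inter (isClosed_iInter fun u => ?_)
      (isClosed_iInter fun v => ?_))
    · exact isClosed_le continuous_const (hcont u v)
    · exact isClosed_le (hcont u v) continuous_const
    · exact isClosed_le (continuous_finset_sum _ fun v _ => hcont u v) continuous_const
    · exact isClosed_le (continuous_finset_sum _ fun u _ => hcont u v) continuous_const
  have hKcpt : IsCompact K := by
    have hsub : K ⊆ Set.Icc (fun _ _ => (0:ℝ)) cap := by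
      intro g hg
      constructor
      · intro u; intro v; exact (hg.1 u v).1
      · intro u; intro v; exact (hg.1 u v).2
    exact (isCompact_Icc).of_isClosed_subset hKclosed hsub
  have hK0 : (0 : V → V → ℝ) ∈ K := by
    refine ⟨fun u v => ⟨le_refl _, hcap0 u v⟩, fun u => ?_, fun v => ?_⟩ <;>
      simp [Nat.cast_nonneg]
  have hcont : ContinuousOn (fun g : V → V → ℝ => ∑ u, ∑ v, g u v) K := by
    apply Continuous.continuousOn
    exact continuous_finset_sum _ fun u _ => continuous_finset_sum _ fun v _ =>
      (continuous_apply v).comp (continuous_apply u)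
  obtain ⟨g, hgK, hgmax⟩ := hKcpt.exists_isMaxOn ⟨0, hK0⟩ hcont
  have hgbd := hgK.1
  have hgrow := hgK.2.1
  have hgcol := hgK.2.2
  -- the total
  set tot : ℝ := ∑ u, ∑ v, g u v with htot
  -- Claim: tot = ∑ q
  have hmain : ∀ u, ∑ v, g u v = (q u : ℝ) := by
    by_contra hne
    push_neg at hne
    have hlt : tot < ∑ u, (q u : ℝ) := by
      obtain ⟨u0, hu0⟩ := hne
      rw [htot]
      exact Finset.sum_lt_sum (fun u _ => hgrow u)
        ⟨u0, Finset.mem_univ _, lt_of_le_of_ne (hgrow u0) hu0⟩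
    -- reachability
    set rel := flowRel G g with hrel
    set Reach : V ⊕ V → Prop :=
      fun x => ∃ u0, (∑ v, g u0 v) < (q u0 : ℝ) ∧ Relation.ReflTransGen rel (Sum.inl u0) x
      with hReach
    -- augmentation invariant
    have haug : ∀ x, Reach x →
        ∃ u0, ((∑ v, g u0 v) < (q u0 : ℝ)) ∧ ∃ M : ℝ, 0 < M ∧
          M⁻¹ ≤ (q u0 : ℝ) - ∑ v, g u0 v ∧
          ∀ θ : ℝ, 0 < θ → θ ≤ M⁻¹ → ∃ g' : V → V → ℝ,
            (∀ p r, 0 ≤ g' p r ∧ g' p r ≤ cap p r) ∧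
            (∀ p r, |g' p r - g p r| ≤ M * θ) ∧
            (∀ p, ∑ r, g' p r = ∑ r, g p r + (if p = u0 then θ else 0) -
                (if Sum.inl p = x then θ else 0)) ∧
            (∀ r, ∑ p, g' p r = ∑ p, g p r + (if Sum.inr r = x then θ else 0)) := by
      rintro x ⟨u0, hu0, hpath⟩
      refine ⟨u0, hu0, ?_⟩
      induction hpath with
      | refl =>
          have hD : (0:ℝ) < (q u0 : ℝ) - ∑ v, g u0 v := by linarith
          refine ⟨((q u0 : ℝ) - ∑ v, g u0 v)⁻¹, inv_pos.mpr hD, by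
            rw [inv_inv], fun θ hθ hθM => ⟨g, hgbd, ?_, ?_, ?_⟩⟩
          · intro p r
            simp only [sub_self, abs_zero]
            exact mul_nonneg (inv_pos.mpr hD).le hθ.le
          · intro p
            by_cases hp : p = u0 <;> simp [hp]
          · intro r; simp
      | @tail c y hcpath hcy ih =>
          obtain ⟨M, hM, hMdef, hstep⟩ := ih
          match c, y, hcy with
          | Sum.inl u, Sum.inr v, hcy =>
            obtain ⟨hadj, hlt1⟩ : G.Adj u v ∧ g u v < 1 := hcy
            have h1g : 0 < 1 - g u v := by linarith
            set M' : ℝ := M + 1 + (M + 1) / (1 - g u v) with hM'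
            have hM'pos : 0 < M' := by positivity
            have hdivnn : 0 ≤ (M + 1) / (1 - g u v) := by positivity
            have hMM' : M ≤ M' := by rw [hM']; linarith
            have hinv1 : M'⁻¹ ≤ M⁻¹ := inv_anti₀ hM hMM'
            have hle' : (M + 1) / (1 - g u v) ≤ M' := by rw [hM']; linarith
            have hinv2 : M'⁻¹ ≤ (1 - g u v) / (M + 1) := by
              calc M'⁻¹ ≤ ((M + 1) / (1 - g u v))⁻¹ := inv_anti₀ (by positivity) hle'
                _ = (1 - g u v) / (M + 1) := by rw [inv_div]
            refine ⟨M', hM'pos, le_trans hinv1 hMdef, fun θ hθ hθM => ?_⟩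
            obtain ⟨g', hg'bd, hg'close, hg'row, hg'col⟩ := hstep θ hθ (le_trans hθM hinv1)
            set g'' : V → V → ℝ := fun p r => g' p r + if p = u ∧ r = v then θ else 0
              with hg''
            have hg''row : ∀ p, ∑ r, g'' p r = ∑ r, g' p r + (if p = u then θ else 0) := by
              intro p
              rw [hg'']
              dsimp only
              rw [Finset.sum_add_distrib]
              congr 1
              by_cases hp : p = u
              · subst hp
                simp only [true_and]
                rw [Finset.sum_ite_eq' univ v (fun _ => θ)]
                simp
              · simp [hp]
            have hg''col : ∀ r, ∑ p, g'' p r = ∑ p, g' p r + (if r = v then θ else 0) := by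
              intro r
              rw [hg'']
              dsimp only
              rw [Finset.sum_add_distrib]
              congr 1
              by_cases hr : r = v
              · subst hr
                simp only [and_true]
                rw [Finset.sum_ite_eq' univ u (fun _ => θ)]
                simp
              · simp [hr]
            refine ⟨g'', ?_, ?_, ?_, ?_⟩
            · intro p r
              rw [hg'']
              dsimp only
              by_cases hpr : p = u ∧ r = v
              · obtain ⟨rfl, rfl⟩ := hpr
                rw [if_pos (show p = p ∧ r = r from ⟨rfl, rfl⟩)]
                constructor
                · have := (hg'bd p r).1; linarith
                · have hclose := hg'close p r
                  have : g' p r ≤ g p r + M * θ := by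
                    have := abs_le.mp hclose; linarith [this.2]
                  have hcapv : cap p r = 1 := by rw [hcap]; simp [hadj]
                  rw [hcapv]
                  have hθ2 : (M + 1) * θ ≤ 1 - g p r := by
                    calc (M + 1) * θ ≤ (M + 1) * M'⁻¹ := by
                          apply mul_le_mul_of_nonneg_left hθM (by positivity)
                      _ ≤ (M + 1) * ((1 - g p r) / (M + 1)) := by
                          apply mul_le_mul_of_nonneg_left hinv2 (by positivity)
                      _ = 1 - g p r := by field_simp
                  linarith
              · simp only [if_neg hpr, add_zero]
                exact hg'bd p r
            · intro p r
              rw [hg'']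
              dsimp only
              by_cases hpr : p = u ∧ r = v
              · obtain ⟨rfl, rfl⟩ := hpr
                rw [if_pos (show p = p ∧ r = r from ⟨rfl, rfl⟩)]
                have hclose := abs_le.mp (hg'close p r)
                have hM1 : M + 1 ≤ M' := by rw [hM']; linarith
                have hmul := mul_le_mul_of_nonneg_right hM1 hθ.le
                rw [abs_le]
                constructor <;> nlinarith [hclose.1, hclose.2]
              · simp only [if_neg hpr, add_zero]
                calc |g' p r - g p r| ≤ M * θ := hg'close p r
                  _ ≤ M' * θ := by nlinarith [hθ.le]
            · intro p
              rw [hg''row p, hg'row p]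
              by_cases hp : p = u <;> simp [hp]
            · intro r
              rw [hg''col r, hg'col r]
              by_cases hr : r = v <;> simp [hr]
          | Sum.inr v, Sum.inl u, hcy =>
            have hpos : 0 < g u v := hcy
            set M' : ℝ := M + 1 + (M + 1) / (g u v) with hM'
            have hM'pos : 0 < M' := by positivity
            have hdivnn : 0 ≤ (M + 1) / (g u v) := by positivity
            have hMM' : M ≤ M' := by rw [hM']; linarith
            have hinv1 : M'⁻¹ ≤ M⁻¹ := inv_anti₀ hM hMM'
            have hle' : (M + 1) / (g u v) ≤ M' := by rw [hM']; linarith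
            have hinv2 : M'⁻¹ ≤ (g u v) / (M + 1) := by
              calc M'⁻¹ ≤ ((M + 1) / (g u v))⁻¹ := inv_anti₀ (by positivity) hle'
                _ = (g u v) / (M + 1) := by rw [inv_div]
            refine ⟨M', hM'pos, le_trans hinv1 hMdef, fun θ hθ hθM => ?_⟩
            obtain ⟨g', hg'bd, hg'close, hg'row, hg'col⟩ := hstep θ hθ (le_trans hθM hinv1)
            set g'' : V → V → ℝ := fun p r => g' p r - if p = u ∧ r = v then θ else 0
              with hg''
            have hg''row : ∀ p, ∑ r, g'' p r = ∑ r, g' p r - (if p = u then θ else 0) := by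
              intro p
              rw [hg'']
              dsimp only
              rw [Finset.sum_sub_distrib]
              congr 1
              by_cases hp : p = u
              · subst hp
                simp only [true_and]
                rw [Finset.sum_ite_eq' univ v (fun _ => θ)]
                simp
              · simp [hp]
            have hg''col : ∀ r, ∑ p, g'' p r = ∑ p, g' p r - (if r = v then θ else 0) := by
              intro r
              rw [hg'']
              dsimp only
              rw [Finset.sum_sub_distrib]
              congr 1
              by_cases hr : r = v
              · subst hr
                simp only [and_true]
                rw [Finset.sum_ite_eq' univ u (fun _ => θ)]
                simp
              · simp [hr]
            refine ⟨g'', ?_, ?_, ?_, ?_⟩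
            · intro p r
              rw [hg'']
              dsimp only
              by_cases hpr : p = u ∧ r = v
              · obtain ⟨rfl, rfl⟩ := hpr
                rw [if_pos (show p = p ∧ r = r from ⟨rfl, rfl⟩)]
                constructor
                · have hclose := abs_le.mp (hg'close p r)
                  have hθ2 : (M + 1) * θ ≤ g p r := by
                    calc (M + 1) * θ ≤ (M + 1) * M'⁻¹ := by
                          apply mul_le_mul_of_nonneg_left hθM (by positivity)
                      _ ≤ (M + 1) * ((g p r) / (M + 1)) := by
                          apply mul_le_mul_of_nonneg_left hinv2 (by positivity)
                      _ = g p r := by field_simp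
                  nlinarith [hθ.le, hM.le, hclose.1]
                · have := (hg'bd p r).2
                  linarith [hθ.le]
              · simp only [if_neg hpr, sub_zero]
                exact hg'bd p r
            · intro p r
              rw [hg'']
              dsimp only
              by_cases hpr : p = u ∧ r = v
              · obtain ⟨rfl, rfl⟩ := hpr
                rw [if_pos (show p = p ∧ r = r from ⟨rfl, rfl⟩)]
                have hclose := abs_le.mp (hg'close p r)
                have hM1 : M + 1 ≤ M' := by rw [hM']; linarith
                have hmul := mul_le_mul_of_nonneg_right hM1 hθ.le
                rw [abs_le]
                constructor <;> nlinarith [hclose.1, hclose.2]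
              · simp only [if_neg hpr, sub_zero]
                calc |g' p r - g p r| ≤ M * θ := hg'close p r
                  _ ≤ M' * θ := by nlinarith [hθ.le]
            · intro p
              rw [hg''row p, hg'row p]
              by_cases hp : p = u <;> simp [hp]
            · intro r
              rw [hg''col r, hg'col r]
              by_cases hr : r = v <;> simp [hr]
    -- facts about reachable sets
    have f1 : ∀ v : V, Reach (Sum.inr v) → ∑ p, g p v = (q v : ℝ) := by
      intro v hRv
      refine le_antisymm (hgcol v) ?_
      by_contra hlt2
      push_neg at hlt2
      obtain ⟨u0, hu0, M, hM, hMdef, hstep⟩ := haug _ hRv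
      set θ : ℝ := min M⁻¹ ((q v : ℝ) - ∑ p, g p v) with hθdef
      have hθpos : 0 < θ := lt_min (by positivity) (by linarith)
      obtain ⟨g', hg'bd, _, hg'row, hg'col⟩ := hstep θ hθpos (min_le_left _ _)
      have hg'K : g' ∈ K := by
        refine ⟨hg'bd, fun p => ?_, fun r => ?_⟩
        · rw [hg'row p]
          have h2 : (if Sum.inl p = Sum.inr v then θ else 0) = 0 := by simp
          rw [h2, sub_zero]
          by_cases hp : p = u0
          · have h3 : (if p = u0 then θ else 0) = θ := if_pos hp
            rw [h3]
            subst hp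
            have h1 : θ ≤ M⁻¹ := min_le_left _ _
            linarith [hMdef]
          · rw [if_neg hp, add_zero]
            exact hgrow p
        · rw [hg'col r]
          by_cases hr : r = v
          · have h3 : (if (Sum.inr r : V ⊕ V) = Sum.inr v then θ else 0) = θ := by
              rw [if_pos (by rw [hr])]
            rw [h3]
            subst hr
            have h2 : θ ≤ (q r : ℝ) - ∑ p, g p r := min_le_right _ _
            linarith
          · have h3 : (if (Sum.inr r : V ⊕ V) = Sum.inr v then θ else 0) = 0 := by
              simp [hr]
            rw [h3, add_zero]
            exact hgcol r
      have htot' : ∑ u, ∑ r, g' u r = tot + θ := by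
        rw [htot]
        have : ∀ p, ∑ r, g' p r = ∑ r, g p r + (if p = u0 then θ else 0) := by
          intro p
          rw [hg'row p]
          simp
        rw [Finset.sum_congr rfl (fun p _ => this p), Finset.sum_add_distrib]
        rw [Finset.sum_ite_eq' univ u0 (fun _ => θ)]
        simp
      have := hgmax hg'K
      simp only [Set.mem_setOf_eq] at this
      rw [htot'] at this
      linarith [this]
    have f2 : ∀ u : V, ¬ Reach (Sum.inl u) → ∑ v, g u v = (q u : ℝ) := by
      intro u hnR
      refine le_antisymm (hgrow u) ?_
      by_contra hlt2
      push_neg at hlt2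
      exact absurd ⟨u, hlt2, Relation.ReflTransGen.refl⟩ hnR
    have f3 : ∀ u v : V, Reach (Sum.inl u) → ¬ Reach (Sum.inr v) → g u v = cap u v := by
      intro u v hRu hnRv
      by_cases hadj : G.Adj u v
      · have hcapv : cap u v = 1 := by rw [hcap]; simp [hadj]
        rw [hcapv]
        refine le_antisymm (by rw [← hcapv]; exact (hgbd u v).2) ?_
        by_contra hlt2
        push_neg at hlt2
        obtain ⟨u0, hu0, hpath⟩ := hRu
        exact hnRv ⟨u0, hu0, hpath.tail (show rel (Sum.inl u) (Sum.inr v) from ⟨hadj, hlt2⟩)⟩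
      · have hcapv : cap u v = 0 := by rw [hcap]; simp [hadj]
        rw [hcapv]
        exact le_antisymm (by rw [← hcapv]; exact (hgbd u v).2) (hgbd u v).1
    have f4 : ∀ u v : V, ¬ Reach (Sum.inl u) → Reach (Sum.inr v) → g u v = 0 := by
      intro u v hnRu hRv
      by_contra hne2
      have hpos : 0 < g u v := lt_of_le_of_ne (hgbd u v).1 (Ne.symm hne2)
      obtain ⟨u0, hu0, hpath⟩ := hRv
      exact hnRu ⟨u0, hu0, hpath.tail (show rel (Sum.inr v) (Sum.inl u) from hpos)⟩
    -- the cut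
    set R : Finset V := univ.filter (fun v => Reach (Sum.inr v)) with hR
    set U : Finset V := univ.filter (fun u => Reach (Sum.inl u)) with hU
    have hmemR : ∀ v, v ∈ R ↔ Reach (Sum.inr v) := by
      intro v; rw [hR]; simp
    have hmemU : ∀ u, u ∈ U ↔ Reach (Sum.inl u) := by
      intro u; rw [hU]; simp
    -- there is a deficient column outside R
    have f5 : ∃ v0, v0 ∈ Rᶜ ∧ ∑ p, g p v0 < (q v0 : ℝ) := by
      have hcoltot : ∑ v, ∑ p, g p v = tot := by rw [htot]; exact Finset.sum_comm
      have : ∑ v, ∑ p, g p v < ∑ v, (q v : ℝ) := by rw [hcoltot]; exact hlt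
      obtain ⟨v0, _, hv0⟩ := Finset.exists_lt_of_sum_lt this
      refine ⟨v0, ?_, hv0⟩
      rw [Finset.mem_compl, hmemR]
      intro hRv
      have := f1 v0 hRv
      linarith
    obtain ⟨v0, hv0mem, hv0lt⟩ := f5
    -- counting
    have hcount1 : ∑ v ∈ Rᶜ, ∑ p, g p v < ∑ v ∈ Rᶜ, (q v : ℝ) := by
      apply Finset.sum_lt_sum (fun v _ => hgcol v) ⟨v0, hv0mem, hv0lt⟩
    have hswap : ∑ v ∈ Rᶜ, ∑ p, g p v = ∑ p, ∑ v ∈ Rᶜ, g p v := Finset.sum_comm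
    have hsplitU : ∑ p, ∑ v ∈ Rᶜ, g p v
        = ∑ p ∈ U, ∑ v ∈ Rᶜ, g p v + ∑ p ∈ Uᶜ, ∑ v ∈ Rᶜ, g p v := by
      rw [Finset.sum_add_sum_compl]
    have hUsum : ∀ p ∈ U, ∑ v ∈ Rᶜ, g p v = ((G.neighborFinset p ∩ Rᶜ).card : ℝ) := by
      intro p hp
      have : ∀ v ∈ Rᶜ, g p v = cap p v := by
        intro v hv
        apply f3 p v ((hmemU p).mp hp)
        rw [Finset.mem_compl, hmemR] at hv
        exact hv
      rw [Finset.sum_congr rfl this]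
      rw [hcap]
      dsimp only
      rw [Finset.sum_boole]
      congr 1
      congr 1
      ext v
      simp [SimpleGraph.mem_neighborFinset, and_comm]
    have hUcsum : ∀ p ∈ Uᶜ, ∑ v ∈ Rᶜ, g p v = (q p : ℝ) := by
      intro p hp
      have hnp : ¬ Reach (Sum.inl p) := by
        rw [Finset.mem_compl, hmemU] at hp
        exact hp
      have hz : ∑ v ∈ R, g p v = 0 := by
        apply Finset.sum_eq_zero
        intro v hv
        exact f4 p v hnp ((hmemR v).mp hv)
      have hsum := Finset.sum_add_sum_compl R (g p)
      rw [hz, zero_add] at hsum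
      rw [hsum]
      exact f2 p hnp
    -- assemble the contradiction with hgale
    have hgaleR : ∑ v ∈ Rᶜ, (q v : ℝ) ≤
        ∑ u, min ((q u : ℝ)) (((G.neighborFinset u ∩ Rᶜ).card : ℝ)) := by
      have := hgale Rᶜ
      have hcast : ((∑ v ∈ Rᶜ, q v : ℕ) : ℝ) ≤
          ((∑ u, min (q u) ((G.neighborFinset u ∩ Rᶜ).card) : ℕ) : ℝ) := by
        exact_mod_cast this
      push_cast at hcast
      exact hcast
    have hminsplit : ∑ u, min ((q u : ℝ)) (((G.neighborFinset u ∩ Rᶜ).card : ℝ))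
        ≤ ∑ p ∈ U, ((G.neighborFinset p ∩ Rᶜ).card : ℝ) + ∑ p ∈ Uᶜ, (q p : ℝ) := by
      rw [← Finset.sum_add_sum_compl U
        (fun u => min ((q u : ℝ)) (((G.neighborFinset u ∩ Rᶜ).card : ℝ)))]
      apply add_le_add
      · exact Finset.sum_le_sum fun p _ => min_le_right _ _
      · exact Finset.sum_le_sum fun p _ => min_le_left _ _
    have hfinal : ∑ v ∈ Rᶜ, (q v : ℝ) >
        ∑ p ∈ U, ((G.neighborFinset p ∩ Rᶜ).card : ℝ) + ∑ p ∈ Uᶜ, (q p : ℝ) := by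
      calc ∑ p ∈ U, ((G.neighborFinset p ∩ Rᶜ).card : ℝ) + ∑ p ∈ Uᶜ, (q p : ℝ)
          = ∑ p ∈ U, ∑ v ∈ Rᶜ, g p v + ∑ p ∈ Uᶜ, ∑ v ∈ Rᶜ, g p v := by
            rw [Finset.sum_congr rfl hUsum, Finset.sum_congr rfl hUcsum]
        _ = ∑ p, ∑ v ∈ Rᶜ, g p v := by rw [← hsplitU]
        _ = ∑ v ∈ Rᶜ, ∑ p, g p v := by rw [← hswap]
        _ < ∑ v ∈ Rᶜ, (q v : ℝ) := hcount1
    linarith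
  -- rows are tight; now columns
  have hcolmain : ∀ v, ∑ u, g u v = (q v : ℝ) := by
    have htoteq : ∑ v, ∑ u, g u v = ∑ v, (q v : ℝ) := by
      rw [Finset.sum_comm]
      exact Finset.sum_congr rfl fun u _ => hmain u
    by_contra hne
    push_neg at hne
    obtain ⟨v0, hv0⟩ := hne
    have : ∑ v, ∑ u, g u v < ∑ v, (q v : ℝ) :=
      Finset.sum_lt_sum (fun v _ => hgcol v)
        ⟨v0, Finset.mem_univ _, lt_of_le_of_ne (hgcol v0) hv0⟩
    linarith
  exact ⟨g, fun u v => (hgbd u v).1,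
    fun u v => by have := (hgbd u v).2; rwa [hcap] at this, hmain, hcolmain⟩

private lemma factor_of_flow (G : SimpleGraph V) [DecidableRel G.Adj] (q : V → ℕ)
    (g : V → V → ℝ) (hg0 : ∀ u v, 0 ≤ g u v)
    (hgcap : ∀ u v, g u v ≤ if G.Adj u v then (1:ℝ) else 0)
    (hrow : ∀ u, ∑ v, g u v = q u) (hcol : ∀ v, ∑ u, g u v = q v) :
    ∃ h, IsFracFactor G q q h := by
  classical
  have hzero : ∀ u v, ¬ G.Adj u v → g u v = 0 := by
    intro u v hn
    have h1 := hgcap u v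
    rw [if_neg hn] at h1
    exact le_antisymm h1 (hg0 u v)
  have hone : ∀ u v, G.Adj u v → g u v ≤ 1 := by
    intro u v hadj
    have h1 := hgcap u v
    rwa [if_pos hadj] at h1
  set h : Sym2 V → ℝ := Sym2.lift ⟨fun u v => (g u v + g v u)/2, fun u v => by ring⟩ with hh
  have hmk : ∀ u v, h s(u,v) = (g u v + g v u)/2 := by
    intro u v; rw [hh]; rfl
  refine ⟨h, ?_, ?_⟩
  · intro e he
    induction e with
    | h u v =>
      rw [SimpleGraph.mem_edgeFinset, SimpleGraph.mem_edgeSet] at he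
      rw [hmk]
      constructor
      · have := hg0 u v; have := hg0 v u; linarith
      · have h1 := hone u v he
        have h2 := hone v u (G.adj_symm he)
        linarith
  · intro x
    have himg : G.incidenceFinset x = (G.neighborFinset x).image (fun w => s(x,w)) := by
      ext e
      rw [SimpleGraph.mem_incidenceFinset]
      constructor
      · intro hinc
        obtain ⟨he, hx⟩ := hinc
        induction e with
        | h u v =>
          rw [Finset.mem_image]
          rw [Sym2.mem_iff] at hx
          rcases hx with rfl | rfl
          · exact ⟨v, by rw [SimpleGraph.mem_neighborFinset]; exact he, rfl⟩
          · exact ⟨u, by rw [SimpleGraph.mem_neighborFinset]; exact (G.adj_symm he),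
              Sym2.eq_swap⟩
      · intro him
        obtain ⟨w, hw, rfl⟩ := Finset.mem_image.mp him
        rw [SimpleGraph.mem_neighborFinset] at hw
        exact ⟨hw, Sym2.mem_mk_left _ _⟩
    have hsum : ∑ e ∈ G.incidenceFinset x, h e = ∑ w ∈ G.neighborFinset x, h s(x,w) := by
      rw [himg]
      rw [Finset.sum_image]
      intro w hw w' hw' heq
      exact (Sym2.congr_right).mp heq
    have hrowx : ∑ w ∈ G.neighborFinset x, g x w = (q x : ℝ) := by
      rw [← hrow x]
      apply Finset.sum_subset (Finset.subset_univ _)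
      intro w _ hw
      rw [SimpleGraph.mem_neighborFinset] at hw
      exact hzero x w hw
    have hcolx : ∑ w ∈ G.neighborFinset x, g w x = (q x : ℝ) := by
      rw [← hcol x]
      apply Finset.sum_subset (Finset.subset_univ _)
      intro w _ hw
      rw [SimpleGraph.mem_neighborFinset] at hw
      exact hzero w x (fun hadj => hw (G.adj_symm hadj))
    have : ∑ e ∈ G.incidenceFinset x, h e = (q x : ℝ) := by
      rw [hsum]
      have : ∀ w ∈ G.neighborFinset x, h s(x,w) = (g x w + g w x)/2 :=
        fun w _ => hmk x w
      rw [Finset.sum_congr rfl this]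
      rw [← Finset.sum_div, Finset.sum_add_distrib, hrowx, hcolx]
      ring
    rw [this]
    exact ⟨le_refl _, le_refl _⟩

end AuxProof

/-- **Theorem 7.** Let `a < b` be positive integers and `G` a graph of order
`n ≥ 2(a+b)(a+b−1)/a` with `δ(G) ≥ ((a+b−1)² + 4b)/(4a)`. If
`|N_G(u) ∪ N_G(v)| ≥ bn/(a+b)` for every pair of nonadjacent vertices `u ≠ v`,
then `G` has all fractional `[a,b]`-factors. -/
theorem all_fractional_ab_factors_of_neighborhood_union {V : Type*} [Fintype V]
    [DecidableEq V] (G : SimpleGraph V) [DecidableRel G.Adj] (a b : ℕ)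
    (ha : 0 < a) (hab : a < b)
    (hn : (Fintype.card V : ℝ) ≥ 2 * ((a : ℝ) + b) * ((a : ℝ) + b - 1) / a)
    (hδ : (G.minDegree : ℝ) ≥ (((a : ℝ) + b - 1) ^ 2 + 4 * b) / (4 * a))
    (hnb : ∀ u v : V, u ≠ v → ¬ G.Adj u v →
      (((G.neighborFinset u ∪ G.neighborFinset v).card : ℝ)) ≥
        (b : ℝ) * (Fintype.card V) / ((a : ℝ) + b)) :
    HasAllFracFactors G (fun _ => a) (fun _ => b) := by
  intro q hqa hqb
  obtain ⟨g, h1, h2, h3, h4⟩ := exists_flow G q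
    (gale_of_criterion G a b q hqa hqb (criterion G a b ha hab hn hδ hnb))
  exact factor_of_flow G q g h1 h2 h3 h4
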